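/- Let T be a tree on vertex set {1,...,n} and let (X(i), 0 ≤ i < n) be the depth-first walk of T, defined by X(i) = |O_i| - 1 where O_i is the stack of open vertices at step i of the ordered depth-first search of T. Then the number of non-tree edges uv permitted by the ordered DFS (i.e., pairs u,v both contained in the stack O_i for some i) equals the area a(T) = Σ_{i=1}^{n-1} X(i). -/

import Mathlib

open scoped Classical
noncomputable section

namespace RandomGraphs

variable {n : ℕ}

/-- One step of ordered depth-first search (oDFS): the state is the pair
(stack of open vertices, set of explored vertices). The first vertex of the
stack is explored: it is removed and its unseen neighbors are prepended to the
stack in increasing order. -/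
def dfsStep (G : SimpleGraph (Fin n)) :
    List (Fin n) × Finset (Fin n) → List (Fin n) × Finset (Fin n) :=
  fun st =>
    match st with
    | ([], A) => ([], A)
    | (v :: rest, A) =>
        (((G.neighborFinset v).filter
            (fun w => w ∉ A ∧ w ∉ (v :: rest))).sort (· ≤ ·) ++ rest,
          insert v A)

/-- The oDFS state at time `i`, started from the stack containing only vertex `0`
(the vertex with smallest label). -/
def dfsState (G : SimpleGraph (Fin n)) (i : ℕ) :
    List (Fin n) × Finset (Fin n) :=
  (dfsStep G)^[i] ((List.finRange n).take 1, ∅)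

/-- The stack `O_i` of open vertices at time `i`. -/
def stackAt (G : SimpleGraph (Fin n)) (i : ℕ) : List (Fin n) :=
  (dfsState G i).1

/-- The depth-first walk `X(i) = |O_i| - 1` of a connected graph. -/
def dfw (G : SimpleGraph (Fin n)) (i : ℕ) : ℕ :=
  (stackAt G i).length - 1

/-- The area `a(T) = Σ_{i=1}^{n-1} X(i)` of a tree. -/
def area (G : SimpleGraph (Fin n)) : ℕ :=
  ∑ i ∈ Finset.Ico 1 n, dfw G i

/-- The set of (unordered) edges permitted by oDFS run on `T`: non-edges `uv`
of `T` such that both `u` and `v` lie in the stack `O_i` for some `i < n`. -/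
def permittedSet (T : SimpleGraph (Fin n)) : Set (Sym2 (Fin n)) :=
  {e | ∃ u v : Fin n, e = s(u, v) ∧ u ≠ v ∧ ¬ T.Adj u v ∧
    ∃ i < n, u ∈ stackAt T i ∧ v ∈ stackAt T i}

end RandomGraphs

namespace RandomGraphsAux

open RandomGraphs SimpleGraph

variable {n : ℕ} (T : SimpleGraph (Fin (n + 1)))

/-- The explored set at time `i`. -/
def Ex (i : ℕ) : Finset (Fin (n + 1)) := (dfsState T i).2

/-- The new vertices prepended when exploring `v` with current stack `v :: rest`. -/
def newL (v : Fin (n + 1)) (rest : List (Fin (n + 1))) (A : Finset (Fin (n + 1))) :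
    List (Fin (n + 1)) :=
  ((T.neighborFinset v).filter (fun w => w ∉ A ∧ w ∉ (v :: rest))).sort (· ≤ ·)

lemma dfsState_zero : dfsState T 0 = ([(0 : Fin (n + 1))], ∅) := by
  simp [dfsState, List.finRange_succ]

lemma stackAt_zero : stackAt T 0 = [(0 : Fin (n + 1))] := by
  simp [stackAt, dfsState_zero]

lemma Ex_zero : Ex T 0 = ∅ := by
  simp [Ex, dfsState_zero]

lemma dfsState_succ (i : ℕ) : dfsState T (i + 1) = dfsStep T (dfsState T i) :=
  Function.iterate_succ_apply' _ _ _

lemma dfsState_eq (i : ℕ) : dfsState T i = (stackAt T i, Ex T i) := rfl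

lemma dfsState_succ_nil {i : ℕ} (h : stackAt T i = []) :
    dfsState T (i + 1) = dfsState T i := by
  rw [dfsState_succ, dfsState_eq, h]
  rfl

lemma dfsState_succ_cons {i : ℕ} {v : Fin (n + 1)} {rest : List (Fin (n + 1))}
    (h : stackAt T i = v :: rest) :
    dfsState T (i + 1) = (newL T v rest (Ex T i) ++ rest, insert v (Ex T i)) := by
  rw [dfsState_succ, dfsState_eq, h]
  rfl

lemma stackAt_succ_cons {i : ℕ} {v : Fin (n + 1)} {rest : List (Fin (n + 1))}
    (h : stackAt T i = v :: rest) :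
    stackAt T (i + 1) = newL T v rest (Ex T i) ++ rest := by
  rw [stackAt, dfsState_succ_cons T h]

lemma Ex_succ_cons {i : ℕ} {v : Fin (n + 1)} {rest : List (Fin (n + 1))}
    (h : stackAt T i = v :: rest) :
    Ex T (i + 1) = insert v (Ex T i) := by
  rw [Ex, dfsState_succ_cons T h]

lemma mem_newL {v w : Fin (n + 1)} {rest : List (Fin (n + 1))} {A : Finset (Fin (n + 1))} :
    w ∈ newL T v rest A ↔ T.Adj v w ∧ w ∉ A ∧ ¬(w = v ∨ w ∈ rest) := by
  simp [newL, Finset.mem_sort, Finset.mem_filter, List.mem_cons]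

/-- The invariants maintained by the oDFS of a tree. -/
structure Inv (i : ℕ) : Prop where
  nodup : (stackAt T i).Nodup
  notex : ∀ w ∈ stackAt T i, w ∉ Ex T i
  nonadj : ∀ u ∈ stackAt T i, ∀ v ∈ stackAt T i, ¬ T.Adj u v
  reach : ∀ w ∈ stackAt T i, (∃ u ∈ Ex T i, T.Adj u w) ∨ (w = 0 ∧ Ex T i = ∅)
  conn : ∀ u ∈ Ex T i, ∃ p : T.Walk 0 u, ∀ x ∈ p.support, x ∈ Ex T i
  closure : ∀ u ∈ Ex T i, ∀ w, T.Adj u w → w ∈ Ex T i ∨ w ∈ stackAt T i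

lemma inv (hT : T.IsTree) : ∀ i, Inv T i := by
  intro i
  induction i with
  | zero =>
      constructor <;> simp [stackAt_zero, Ex_zero]
  | succ i ih =>
      rcases hstk : stackAt T i with _ | ⟨v, rest⟩
      · have h := dfsState_succ_nil T hstk
        have h1 : stackAt T (i + 1) = stackAt T i := by rw [stackAt, h]; rfl
        have h2 : Ex T (i + 1) = Ex T i := by rw [Ex, h]; rfl
        exact ⟨by rw [h1]; exact ih.nodup, by rw [h1, h2]; exact ih.notex,
          by rw [h1]; exact ih.nonadj, by rw [h1, h2]; exact ih.reach,
          by rw [h2]; exact ih.conn, by rw [h1, h2]; exact ih.closure⟩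
      · have hstk' := stackAt_succ_cons T hstk
        have hex' := Ex_succ_cons T hstk
        have hvmem : v ∈ stackAt T i := by rw [hstk]; exact List.mem_cons_self
        have hrmem : ∀ w ∈ rest, w ∈ stackAt T i := by
          intro w hw; rw [hstk]; exact List.mem_cons_of_mem _ hw
        have hnodup := ih.nodup
        rw [hstk] at hnodup
        have hvrest : v ∉ rest := (List.nodup_cons.mp hnodup).1
        have hrnodup : rest.Nodup := (List.nodup_cons.mp hnodup).2
        -- key nonadjacency between new vertices and old stack vertices
        have key : ∀ u₁ ∈ newL T v rest (Ex T i), ∀ u₂ ∈ rest, ¬ T.Adj u₁ u₂ := by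
          intro u₁ h₁ u₂ h₂ hadj
          rw [mem_newL] at h₁
          obtain ⟨hvu₁, hu₁ex, hu₁n⟩ := h₁
          push_neg at hu₁n
          rcases ih.reach u₂ (hrmem u₂ h₂) with ⟨u, hu, huu₂⟩ | ⟨hu₂0, hEx⟩
          · rcases ih.reach v hvmem with ⟨u', hu', hu'v⟩ | ⟨hv0, hEx⟩
            · obtain ⟨p, hp⟩ := ih.conn u hu
              obtain ⟨p', hp'⟩ := ih.conn u' hu'
              -- walk v → u' → 0 → u → u₂ inside {v} ∪ Ex i ∪ {u₂}
              let W : T.Walk v u₂ :=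
                Walk.cons hu'v.symm (p'.reverse.append (p.append (Walk.cons huu₂ Walk.nil)))
              have hWsupp : ∀ x ∈ W.support, x = v ∨ x ∈ Ex T i ∨ x = u₂ := by
                intro x hx
                simp only [W, Walk.support_cons, List.mem_cons,
                  Walk.mem_support_append_iff, Walk.support_reverse, List.mem_reverse,
                  Walk.support_nil] at hx
                rcases hx with h | h | h | h
                · exact Or.inl h
                · exact Or.inr (Or.inl (hp' x h))
                · exact Or.inr (Or.inl (hp x h))
                · rcases h with h | h
                  · exact Or.inr (Or.inl (h ▸ hu))
                  · simp at h
                    exact Or.inr (Or.inr h)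
              -- direct path v → u₁ → u₂
              have hvne : v ≠ u₁ := fun h => (hu₁n.1 h.symm)
              have hvu₂ : v ≠ u₂ := fun h => hvrest (h ▸ h₂)
              have hPA : (Walk.cons hvu₁ (Walk.cons hadj Walk.nil) : T.Walk v u₂).IsPath := by
                simp [Walk.isPath_def]
                exact ⟨⟨hvne, hvu₂⟩, hadj.ne⟩
              obtain ⟨q, hq, huniq⟩ := hT.existsUnique_path v u₂
              have heq : (W.toPath : T.Walk v u₂)
                  = (Walk.cons hvu₁ (Walk.cons hadj Walk.nil) : T.Walk v u₂) :=
                (huniq _ W.toPath.prop).trans (huniq _ hPA).symm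
              have hu₁mem : u₁ ∈ (W.toPath : T.Walk v u₂).support := by
                rw [heq]; simp
              rcases hWsupp u₁ (Walk.support_toPath_subset W hu₁mem) with h | h | h
              · exact hvne h.symm
              · exact hu₁ex h
              · exact hadj.ne h
            · exact absurd (hEx ▸ hu) (Finset.notMem_empty u)
          · rcases ih.reach v hvmem with ⟨u', hu', _⟩ | ⟨hv0, _⟩
            · exact absurd (hEx ▸ hu') (Finset.notMem_empty u')
            · exact hvrest ((hv0.trans hu₂0.symm) ▸ h₂)
        constructor
        · -- nodup
          rw [hstk']
          refine List.Nodup.append (Finset.sort_nodup _ _) hrnodup ?_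
          intro w hw hw'
          rw [mem_newL] at hw
          exact hw.2.2 (Or.inr hw')
        · -- notex
          rw [hstk', hex']
          intro w hw
          rcases List.mem_append.mp hw with h | h
          · rw [mem_newL] at h
            push_neg at h
            simp only [Finset.mem_insert, not_or]
            exact ⟨h.2.2.1, h.2.1⟩
          · simp only [Finset.mem_insert, not_or]
            exact ⟨fun he => hvrest (he ▸ h), ih.notex w (hrmem w h)⟩
        · -- nonadj
          rw [hstk']
          intro u₁ h₁ u₂ h₂ hadj
          rcases List.mem_append.mp h₁ with h₁ | h₁ <;>
            rcases List.mem_append.mp h₂ with h₂ | h₂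
          · -- both new: triangle through v
            rw [mem_newL] at h₁ h₂
            have hP1 : (Walk.cons hadj Walk.nil : T.Walk u₁ u₂).IsPath := by
              simp [Walk.isPath_def, hadj.ne]
            have hP2 : (Walk.cons h₁.1.symm (Walk.cons h₂.1 Walk.nil) :
                T.Walk u₁ u₂).IsPath := by
              push_neg at h₁ h₂
              simp [Walk.isPath_def]
              exact ⟨⟨h₁.2.2.1, hadj.ne⟩, fun h => h₂.2.2.1 h.symm⟩
            obtain ⟨q, hq, huniq⟩ := hT.existsUnique_path u₁ u₂
            have := (huniq _ hP1).trans (huniq _ hP2).symm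
            have := congrArg Walk.length this
            simp [Walk.length_cons] at this
          · exact key u₁ h₁ u₂ h₂ hadj
          · exact key u₂ h₂ u₁ h₁ hadj.symm
          · exact ih.nonadj u₁ (hrmem _ h₁) u₂ (hrmem _ h₂) hadj
        · -- reach
          rw [hstk', hex']
          intro w hw
          rcases List.mem_append.mp hw with h | h
          · rw [mem_newL] at h
            exact Or.inl ⟨v, Finset.mem_insert_self _ _, h.1⟩
          · rcases ih.reach w (hrmem w h) with ⟨u, hu, huw⟩ | ⟨hw0, hEx⟩
            · exact Or.inl ⟨u, Finset.mem_insert_of_mem hu, huw⟩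
            · rcases ih.reach v hvmem with ⟨u', hu', _⟩ | ⟨hv0, _⟩
              · exact absurd (hEx ▸ hu') (Finset.notMem_empty u')
              · exact absurd ((hv0.trans hw0.symm) ▸ h) hvrest
        · -- conn
          rw [hex']
          intro u hu
          rcases Finset.mem_insert.mp hu with rfl | hu
          · rcases ih.reach u hvmem with ⟨u', hu', hu'u⟩ | ⟨hu0, _⟩
            · obtain ⟨p, hp⟩ := ih.conn u' hu'
              refine ⟨p.append (Walk.cons hu'u Walk.nil), ?_⟩
              intro x hx
              rcases (Walk.mem_support_append_iff _ _).mp hx with h | h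
              · exact Finset.mem_insert_of_mem (hp x h)
              · simp at h
                rcases h with h | h
                · exact Finset.mem_insert_of_mem (h ▸ hu')
                · exact h ▸ Finset.mem_insert_self _ _
            · subst hu0
              exact ⟨Walk.nil, by simp⟩
          · obtain ⟨p, hp⟩ := ih.conn u hu
            exact ⟨p, fun x hx => Finset.mem_insert_of_mem (hp x hx)⟩
        · -- closure
          rw [hstk', hex']
          intro u hu w hadj
          rcases Finset.mem_insert.mp hu with rfl | hu
          · by_cases hwex : w ∈ Ex T i
            · exact Or.inl (Finset.mem_insert_of_mem hwex)
            · by_cases hwst : w ∈ rest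
              · exact Or.inr (List.mem_append_right _ hwst)
              · have hwv : w ≠ u := hadj.ne'
                refine Or.inr (List.mem_append_left _ ?_)
                rw [mem_newL]
                exact ⟨hadj, hwex, by push_neg; exact ⟨hwv, hwst⟩⟩
          · rcases ih.closure u hu w hadj with h | h
            · exact Or.inl (Finset.mem_insert_of_mem h)
            · rw [hstk] at h
              rcases List.mem_cons.mp h with rfl | h
              · exact Or.inl (Finset.mem_insert_self _ _)
              · exact Or.inr (List.mem_append_right _ h)

lemma Ex_subset_succ (i : ℕ) : Ex T i ⊆ Ex T (i + 1) := by
  rcases hstk : stackAt T i with _ | ⟨v, rest⟩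
  · show (dfsState T i).2 ⊆ (dfsState T (i + 1)).2
    rw [dfsState_succ_nil T hstk]
  · rw [Ex_succ_cons T hstk]
    exact Finset.subset_insert _ _

lemma Ex_mono : ∀ {i j : ℕ}, i ≤ j → Ex T i ⊆ Ex T j := by
  intro i j hij
  induction j with
  | zero => rw [Nat.le_zero.mp hij]
  | succ j ih =>
      rcases Nat.lt_or_ge i (j + 1) with h | h
      · exact (ih (Nat.lt_succ_iff.mp h)).trans (Ex_subset_succ T j)
      · rw [Nat.le_antisymm hij h]

lemma zero_mem (i : ℕ) : (0 : Fin (n + 1)) ∈ Ex T i ∨ (0 : Fin (n + 1)) ∈ stackAt T i := by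
  induction i with
  | zero => right; rw [stackAt_zero]; exact List.mem_singleton.mpr rfl
  | succ i ih =>
      rcases hstk : stackAt T i with _ | ⟨v, rest⟩
      · have h := dfsState_succ_nil T hstk
        simp only [stackAt, Ex, h] at ih ⊢
        exact ih
      · rw [stackAt_succ_cons T hstk, Ex_succ_cons T hstk]
        rcases ih with h | h
        · exact Or.inl (Finset.mem_insert_of_mem h)
        · rw [hstk] at h
          rcases List.mem_cons.mp h with h | h
          · exact Or.inl (h ▸ Finset.mem_insert_self _ _)
          · exact Or.inr (List.mem_append_right _ h)

lemma card_Ex_le (i : ℕ) : (Ex T i).card ≤ i := by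
  induction i with
  | zero => simp [Ex_zero]
  | succ i ih =>
      rcases hstk : stackAt T i with _ | ⟨v, rest⟩
      · have h2 : Ex T (i + 1) = Ex T i := by
          simp only [Ex, dfsState_succ_nil T hstk]
        rw [h2]
        exact le_trans ih (Nat.le_succ i)
      · rw [Ex_succ_cons T hstk]
        exact le_trans (Finset.card_insert_le _ _) (by omega)

lemma mem_of_walk {S : Finset (Fin (n + 1))}
    (hcl : ∀ u ∈ S, ∀ w, T.Adj u w → w ∈ S) :
    ∀ {a b : Fin (n + 1)}, T.Walk a b → a ∈ S → b ∈ S := by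
  intro a b p
  induction p with
  | nil => exact id
  | cons h q ih => intro ha; exact ih (hcl _ ha _ h)

lemma stack_ne_nil (hT : T.IsTree) {i : ℕ} (hi : i ≤ n) : stackAt T i ≠ [] := by
  intro hnil
  have h0 : (0 : Fin (n + 1)) ∈ Ex T i := by
    rcases zero_mem T i with h | h
    · exact h
    · rw [hnil] at h; exact absurd h List.not_mem_nil
  have hcl : ∀ u ∈ Ex T i, ∀ w, T.Adj u w → w ∈ Ex T i := by
    intro u hu w hadj
    rcases (inv T hT i).closure u hu w hadj with h | h
    · exact h
    · rw [hnil] at h; exact absurd h List.not_mem_nil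
  have huniv : ∀ u : Fin (n + 1), u ∈ Ex T i := by
    intro u
    obtain ⟨p⟩ := (hT.isConnected (0 : Fin (n + 1)) u)
    exact mem_of_walk T hcl p h0
  have hcard : (Ex T i).card = n + 1 := by
    have : Ex T i = Finset.univ := Finset.eq_univ_iff_forall.mpr huniv
    rw [this, Finset.card_univ, Fintype.card_fin]
  have := card_Ex_le T i
  omega

lemma card_Ex (hT : T.IsTree) : ∀ i, i ≤ n + 1 → (Ex T i).card = i := by
  intro i
  induction i with
  | zero => intro _; simp [Ex_zero]
  | succ i ih =>
      intro hi
      rcases hstk : stackAt T i with _ | ⟨v, rest⟩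
      · exact absurd hstk (stack_ne_nil T hT (by omega))
      · rw [Ex_succ_cons T hstk, Finset.card_insert_of_notMem
          ((inv T hT i).notex v (by rw [hstk]; exact List.mem_cons_self)),
          ih (by omega)]

lemma stack_nil_top (hT : T.IsTree) : stackAt T (n + 1) = [] := by
  have hcard : (Ex T (n + 1)).card = n + 1 := card_Ex T hT (n + 1) le_rfl
  have huniv : Ex T (n + 1) = Finset.univ := by
    apply Finset.eq_univ_of_card
    rw [hcard, Fintype.card_fin]
  rw [List.eq_nil_iff_forall_not_mem]
  intro w hw
  exact (inv T hT (n + 1)).notex w hw (huniv ▸ Finset.mem_univ w)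

/-- The permitted pairs contributed at step `i`: head paired with each tail element. -/
def Fi (i : ℕ) : Finset (Sym2 (Fin (n + 1))) :=
  (stackAt T i).tail.toFinset.image (fun w => s((stackAt T i).headI, w))

lemma Fi_cons {i : ℕ} {v : Fin (n + 1)} {rest : List (Fin (n + 1))}
    (h : stackAt T i = v :: rest) :
    Fi T i = rest.toFinset.image (fun w => s(v, w)) := by
  rw [Fi, h]
  rfl

lemma card_Fi (hT : T.IsTree) {i : ℕ} (hi : i ≤ n) : (Fi T i).card = dfw T i := by
  obtain ⟨v, rest, hstk⟩ : ∃ v rest, stackAt T i = v :: rest := by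
    rcases hs : stackAt T i with _ | ⟨v, rest⟩
    · exact absurd hs (stack_ne_nil T hT hi)
    · exact ⟨v, rest, rfl⟩
  rw [Fi_cons T hstk,
    Finset.card_image_of_injective _ (fun a b hab => Sym2.congr_right.mp hab)]
  have hnodup := (inv T hT i).nodup
  rw [hstk] at hnodup
  rw [List.toFinset_card_of_nodup (List.nodup_cons.mp hnodup).2]
  simp [dfw, hstk]

lemma Fi_subset_permitted (hT : T.IsTree) {i : ℕ} (hi : i ≤ n) :
    ∀ e ∈ Fi T i, e ∈ permittedSet T := by
  intro e he
  obtain ⟨v, rest, hstk⟩ : ∃ v rest, stackAt T i = v :: rest := by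
    rcases hs : stackAt T i with _ | ⟨v, rest⟩
    · exact absurd hs (stack_ne_nil T hT hi)
    · exact ⟨v, rest, rfl⟩
  rw [Fi_cons T hstk] at he
  obtain ⟨w, hw, rfl⟩ := Finset.mem_image.mp he
  rw [List.mem_toFinset] at hw
  have hvmem : v ∈ stackAt T i := by rw [hstk]; exact List.mem_cons_self
  have hwmem : w ∈ stackAt T i := by rw [hstk]; exact List.mem_cons_of_mem _ hw
  have hnodup := (inv T hT i).nodup
  rw [hstk] at hnodup
  have hvw : v ≠ w := fun h => (List.nodup_cons.mp hnodup).1 (h ▸ hw)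
  exact ⟨v, w, rfl, hvw, (inv T hT i).nonadj v hvmem w hwmem,
    i, by omega, hvmem, hwmem⟩

lemma Fi_disj_lt (hT : T.IsTree) {i j : ℕ} (hij : i < j) (hj : j ≤ n) :
    Disjoint (Fi T i) (Fi T j) := by
  rw [Finset.disjoint_left]
  intro e hei hej
  obtain ⟨v, rest, hstki⟩ : ∃ v rest, stackAt T i = v :: rest := by
    rcases hs : stackAt T i with _ | ⟨v, rest⟩
    · exact absurd hs (stack_ne_nil T hT (by omega))
    · exact ⟨v, rest, rfl⟩
  obtain ⟨v', rest', hstkj⟩ : ∃ v rest, stackAt T j = v :: rest := by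
    rcases hs : stackAt T j with _ | ⟨v, rest⟩
    · exact absurd hs (stack_ne_nil T hT hj)
    · exact ⟨v, rest, rfl⟩
  rw [Fi_cons T hstki] at hei
  rw [Fi_cons T hstkj] at hej
  obtain ⟨w, hw, hew⟩ := Finset.mem_image.mp hei
  obtain ⟨w', hw', hew'⟩ := Finset.mem_image.mp hej
  rw [List.mem_toFinset] at hw hw'
  have hvEx : v ∈ Ex T j := by
    have h1 : v ∈ Ex T (i + 1) := by
      rw [Ex_succ_cons T hstki]; exact Finset.mem_insert_self _ _
    exact Ex_mono T (by omega) h1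
  have heq : s(v, w) = s(v', w') := hew.trans hew'.symm
  have hnotex := (inv T hT j).notex
  rcases Sym2.eq_iff.mp heq with ⟨h1, _⟩ | ⟨h1, _⟩
  · exact hnotex v' (by rw [hstkj]; exact List.mem_cons_self) (h1 ▸ hvEx)
  · exact hnotex w' (by rw [hstkj]; exact List.mem_cons_of_mem _ hw') (h1 ▸ hvEx)

lemma covered (hT : T.IsTree) :
    ∀ k i, i + k = n + 1 → ∀ u v : Fin (n + 1), u ∈ stackAt T i → v ∈ stackAt T i →
      u ≠ v → ∃ j ≤ n, s(u, v) ∈ Fi T j := by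
  intro k
  induction k with
  | zero =>
      intro i hik u v hu _ _
      have : i = n + 1 := by omega
      rw [this, stack_nil_top T hT] at hu
      exact absurd hu List.not_mem_nil
  | succ k ih =>
      intro i hik u v hu hv huv
      obtain ⟨w, rest, hstk⟩ : ∃ w rest, stackAt T i = w :: rest := by
        rcases hs : stackAt T i with _ | ⟨w, rest⟩
        · rw [hs] at hu; exact absurd hu List.not_mem_nil
        · exact ⟨w, rest, rfl⟩
      rw [hstk] at hu hv
      by_cases hwu : w = u
      · subst hwu
        have hvrest : v ∈ rest := by
          rcases List.mem_cons.mp hv with h | h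
          · exact absurd h.symm huv
          · exact h
        refine ⟨i, by omega, ?_⟩
        rw [Fi_cons T hstk]
        exact Finset.mem_image.mpr ⟨v, List.mem_toFinset.mpr hvrest, rfl⟩
      · by_cases hwv : w = v
        · subst hwv
          have hurest : u ∈ rest := by
            rcases List.mem_cons.mp hu with h | h
            · exact absurd h.symm hwu
            · exact h
          refine ⟨i, by omega, ?_⟩
          rw [Fi_cons T hstk, Sym2.eq_swap]
          exact Finset.mem_image.mpr ⟨u, List.mem_toFinset.mpr hurest, rfl⟩
        · have hurest : u ∈ rest := by
            rcases List.mem_cons.mp hu with h | h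
            · exact absurd h.symm hwu
            · exact h
          have hvrest : v ∈ rest := by
            rcases List.mem_cons.mp hv with h | h
            · exact absurd h.symm hwv
            · exact h
          have hsub := stackAt_succ_cons T hstk
          exact ih (i + 1) (by omega) u v
            (by rw [hsub]; exact List.mem_append_right _ hurest)
            (by rw [hsub]; exact List.mem_append_right _ hvrest) huv

end RandomGraphsAux

open RandomGraphs in
/-- For a tree `T` on `[n]`, the number of non-tree edges
permitted by the ordered depth-first search of `T` equals the area
`a(T) = Σ_{i=1}^{n-1} X(i)` of `T`, where `X` is the depth-first walk. -/
theorem card_permitted_eq_area (n : ℕ) (T : SimpleGraph (Fin n))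
    (hT : T.IsTree) :
    (permittedSet T).ncard = area T := by
  open RandomGraphsAux in
  rcases n with _ | m
  · exact absurd hT.isConnected.nonempty (by rw [not_nonempty_iff]; infer_instance)
  · set B : Finset (Sym2 (Fin (m + 1))) :=
      (Finset.range (m + 1)).biUnion (Fi T) with hB
    have hset : permittedSet T = ↑B := by
      ext e
      constructor
      · rintro ⟨u, v, rfl, huv, _, i, hin, hu, hv⟩
        obtain ⟨j, hj, hmem⟩ :=
          covered T hT (m + 1 - i) i (by omega) u v hu hv huv
        simp only [hB, Finset.coe_biUnion, Finset.mem_coe, Finset.mem_biUnion,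
          Finset.mem_range, Set.mem_iUnion]
        exact ⟨j, by omega, hmem⟩
      · intro he
        simp only [hB, Finset.coe_biUnion, Finset.mem_coe, Finset.mem_biUnion,
          Finset.mem_range, Set.mem_iUnion] at he
        obtain ⟨j, hj, hmem⟩ := he
        exact Fi_subset_permitted T hT (by omega) e hmem
    rw [hset, Set.ncard_coe_finset]
    have hdisj : ∀ i ∈ Finset.range (m + 1), ∀ j ∈ Finset.range (m + 1),
        i ≠ j → Disjoint (Fi T i) (Fi T j) := by
      intro i hi j hj hij
      rw [Finset.mem_range] at hi hj
      rcases Nat.lt_or_ge i j with h | h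
      · exact Fi_disj_lt T hT h (by omega)
      · exact (Fi_disj_lt T hT (by omega : j < i) (by omega)).symm
    rw [hB, Finset.card_biUnion hdisj]
    have hsum : ∀ i ∈ Finset.range (m + 1), (Fi T i).card = dfw T i := by
      intro i hi
      rw [Finset.mem_range] at hi
      exact card_Fi T hT (by omega)
    rw [Finset.sum_congr rfl hsum]
    unfold area
    rw [Finset.range_eq_Ico, Finset.sum_eq_sum_Ico_succ_bot (by omega : 0 < m + 1)]
    have h0 : dfw T 0 = 0 := by simp [dfw, stackAt_zero]
    rw [h0, zero_add]
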